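/- Let N, n be positive integers, X : Fin n → M_N(ℂ), let P be the monomial of the word ℓ : Fin k → Fin n and Q the monomial of the word ℓ′ : Fin k′ → Fin n, let i, j ∈ Fin n and a, b, c, d ∈ Fin N. For s, t ∈ ℂ let X^{s,t} be the n-tuple obtained from X by adding s·E(d,a) to X_j and t·E(b,c) to X_i (both additions to the same matrix if i = j), and set G(s,t) = Tr P(X^{s,t}) · Tr Q(X^{s,t}). Then ∂²G/∂s∂t(0,0) = Tr Q(X) · H_P + Tr P(X) · H_Q + [(𝒟^{x_i}P)(X)]_{cb}·[(𝒟^{x_j}Q)(X)]_{ad} + [(𝒟^{x_i}Q)(X)]_{cb}·[(𝒟^{x_j}P)(X)]_{ad}, where H_P (respectively H_Q) is the mixed second partial derivative at (0,0) of (s,t) ↦ Tr P(X^{s,t}) (respectively (s,t) ↦ Tr Q(X^{s,t})), and 𝒟^{x_i} denotes the cyclic derivative: 𝒟^{x_i}P = Σ_{r : ℓ(r)=i} X_{ℓ(r+1)} ⋯ X_{ℓ(k−1)} X_{ℓ(0)} ⋯ X_{ℓ(r−1)}. (This is the Leibniz rule for the noncommutative Hessian of a product of traces, with the Δ(P,Q)-term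 given by twisted tensor products of cyclic gradients.) -/

import Mathlib

open Matrix

/-- The mixed second partial derivative `∂²G/∂s∂t` at `(0,0)` of `G : ℂ × ℂ → ℂ`
(written curried, first argument `s`, second argument `t`). -/
noncomputable def mixedDeriv (G : ℂ → ℂ → ℂ) : ℂ :=
  deriv (fun t : ℂ => deriv (fun s : ℂ => G s t) 0) 0

/-- The monomial `Q(X) = X_{ℓ(0)} X_{ℓ(1)} ⋯ X_{ℓ(k−1)}` (ordered product, empty = `1`). -/
noncomputable def wordProd {N n k : ℕ} (X : Fin n → Matrix (Fin N) (Fin N) ℂ)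
    (ℓ : Fin k → Fin n) : Matrix (Fin N) (Fin N) ℂ :=
  ((List.finRange k).map (fun r => X (ℓ r))).prod

/-- Voiculescu's cyclic derivative of the monomial of `ℓ` with respect to `x_i`, evaluated at
`X`: `𝒟^{x_i}Q = Σ_{r : ℓ(r)=i} X_{ℓ(r+1)} ⋯ X_{ℓ(k−1)} X_{ℓ(0)} ⋯ X_{ℓ(r−1)}`. -/
noncomputable def cycDeriv {N n k : ℕ} (X : Fin n → Matrix (Fin N) (Fin N) ℂ)
    (ℓ : Fin k → Fin n) (i : Fin n) : Matrix (Fin N) (Fin N) ℂ :=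
  ∑ r ∈ Finset.univ.filter (fun r : Fin k => ℓ r = i),
    (((List.finRange k).filter (fun s => r < s)).map (fun s => X (ℓ s))).prod *
      (((List.finRange k).filter (fun s => s < r)).map (fun s => X (ℓ s))).prod

/-- The perturbed tuple `X^{s,t}`: add `s·E(d,a)` to `X_j` and `t·E(b,c)` to `X_i`. -/
noncomputable def perturb {N n : ℕ} (X : Fin n → Matrix (Fin N) (Fin N) ℂ)
    (j i : Fin n) (d a b c : Fin N) (s t : ℂ) : Fin n → Matrix (Fin N) (Fin N) ℂ :=
  fun p => X p + (if p = j then s • Matrix.single d a (1 : ℂ) else 0) +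
    (if p = i then t • Matrix.single b c (1 : ℂ) else 0)

/-! ### Auxiliary lemmas -/

attribute [local instance] Matrix.linftyOpNormedAddCommGroup Matrix.linftyOpNormedRing
  Matrix.linftyOpNormedAlgebra

section Aux

lemma range_filter_lt' (m k : ℕ) :
    (List.range k).filter (fun x => x < m) = List.range (min m k) := by
  induction k with
  | zero => simp
  | succ k ih =>
    rw [List.range_succ, List.filter_append, ih]
    by_cases h : k < m
    · have h1 : min m (k+1) = k + 1 := by omega
      have h2 : min m k = k := by omega
      simp [h, h1, h2, List.range_succ]
    · have h1 : min m (k+1) = min m k := by omega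
      simp [h, h1]

lemma range_filter_gt' (m k : ℕ) :
    (List.range k).filter (fun x => m < x) = (List.range k).drop (m+1) := by
  induction k with
  | zero => simp
  | succ k ih =>
    rw [List.range_succ, List.filter_append, ih, List.drop_append]
    by_cases h : m < k
    · have h2 : m + 1 - k = 0 := by omega
      simp [h, h2]
    · have h1 : (List.range k).drop (m+1) = [] := by
        apply List.drop_eq_nil_of_le; simp; omega
      simp [h, h1]
      omega

lemma map_coe_finRange' (k : ℕ) : (List.finRange k).map Fin.val = List.range k := by
  apply List.ext_getElem <;> simp

lemma finRange_filter_lt {k : ℕ} (r : Fin k) :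
    (List.finRange k).filter (fun s => s < r) = (List.finRange k).take r.val := by
  apply List.map_injective_iff.mpr Fin.val_injective
  rw [List.map_take, map_coe_finRange', List.take_range]
  have h : ((List.finRange k).filter (fun s => s < r)).map Fin.val
      = ((List.finRange k).map Fin.val).filter (fun x => x < r.val) := by
    rw [List.filter_map]
    congr 1
  rw [h, map_coe_finRange', range_filter_lt']

lemma finRange_filter_gt {k : ℕ} (r : Fin k) :
    (List.finRange k).filter (fun s => r < s) = (List.finRange k).drop (r.val + 1) := by
  apply List.map_injective_iff.mpr Fin.val_injective
  rw [List.map_drop, map_coe_finRange']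
  have h : ((List.finRange k).filter (fun s => r < s)).map Fin.val
      = ((List.finRange k).map Fin.val).filter (fun x => r.val < x) := by
    rw [List.filter_map]
    congr 1
  rw [h, map_coe_finRange', range_filter_gt']

/-- Trace as a continuous linear map. -/
noncomputable def traceCLM (N : ℕ) : Matrix (Fin N) (Fin N) ℂ →L[ℂ] ℂ :=
  LinearMap.toContinuousLinearMap (Matrix.traceLinearMap (Fin N) ℂ ℂ)

@[simp] lemma traceCLM_apply {N : ℕ} (M : Matrix (Fin N) (Fin N) ℂ) :
    traceCLM N M = M.trace := rfl

lemma trace_stdBasis_mul {N : ℕ} (x y : Fin N) (M : Matrix (Fin N) (Fin N) ℂ) :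
    (Matrix.single x y (1:ℂ) * M).trace = M y x := by
  simp [Matrix.trace, Matrix.diag, Matrix.mul_apply, Matrix.single, ite_and]

/-- Key analytic lemma: derivative at `0` of the trace of a word in a one-parameter
linear perturbation of the tuple. -/
lemma hasDerivAt_trace_word {N n k : ℕ} (Y : Fin n → Matrix (Fin N) (Fin N) ℂ)
    (ℓ : Fin k → Fin n) (j : Fin n) (E : Matrix (Fin N) (Fin N) ℂ) :
    HasDerivAt (fun s : ℂ => (wordProd (fun p => Y p + if p = j then s • E else 0) ℓ).trace)
      ((E * cycDeriv Y ℓ j).trace) 0 := by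
  classical
  set f : Fin k → ℂ → Matrix (Fin N) (Fin N) ℂ :=
    fun r s => Y (ℓ r) + if ℓ r = j then s • E else 0 with hf
  set f' : Fin k → ℂ →L[ℂ] Matrix (Fin N) (Fin N) ℂ :=
    fun r => if ℓ r = j then ContinuousLinearMap.smulRight (1 : ℂ →L[ℂ] ℂ) E else 0 with hf'
  have hder : ∀ r ∈ List.finRange k, HasFDerivAt (f r ·) (f' r) (0 : ℂ) := by
    intro r _
    by_cases h : ℓ r = j
    · simp only [hf, hf', h, if_true]
      have h1 : HasDerivAt (fun s : ℂ => Y (ℓ r) + s • E) E 0 := by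
        have := ((hasDerivAt_id (0:ℂ)).smul_const E).const_add (Y (ℓ r))
        simp only [id, one_smul] at this
        exact this
      simpa [hf, hf', h, ContinuousLinearMap.smulRight_one_eq_toSpanSingleton] using h1.hasFDerivAt
    · simp only [hf, hf', h, if_false]
      exact hasFDerivAt_const _ _
  have hprod := HasFDerivAt.list_prod' (l := List.finRange k) hder
  have htr := ((traceCLM N).hasFDerivAt).comp (0:ℂ) hprod
  have hd := htr.hasDerivAt
  simp only [Function.comp_def] at hd
  have hfun : (fun s : ℂ => (traceCLM N) (((List.finRange k).map (f · s)).prod))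
      = fun s : ℂ => (wordProd (fun p => Y p + if p = j then s • E else 0) ℓ).trace := by
    funext s; simp [wordProd, hf]
  rw [hfun] at hd
  refine hd.congr_deriv (Eq.symm ?_)
  erw [ContinuousLinearMap.comp_apply]
  simp only [ContinuousLinearMap.coe_sum', Finset.sum_apply, ContinuousLinearMap.smul_apply]
  show _ = (traceCLM N) (∑ x : Fin (List.finRange k).length, _ * (f' (List.finRange k)[x] 1 * _))
  simp only [ContinuousLinearMap.coe_comp', Function.comp_apply,
    ContinuousLinearMap.coe_sum', Finset.sum_apply, ContinuousLinearMap.smul_apply,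
    ContinuousLinearMap.smulRight_apply, traceCLM_apply, smul_eq_mul, MulOpposite.unop_op]
  have hf0 : (fun x => f x 0) = fun q => Y (ℓ q) := by
    funext q; simp [hf]
  rw [hf0]
  rw [Matrix.trace_sum]
  rw [cycDeriv, Matrix.mul_sum, Matrix.trace_sum, Finset.sum_filter]
  refine Fintype.sum_equiv (finCongr (List.length_finRange (n := k))).symm _ _ ?_
  intro r
  simp only [Fin.getElem_fin, List.getElem_finRange]
  have hx : ∀ h, Fin.cast (List.length_finRange (n := k))
      ⟨((((finCongr (List.length_finRange (n := k))).symm) r : Fin (List.finRange k).length) : ℕ), h⟩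
      = r := fun h => rfl
  rw [hx]
  by_cases h : ℓ r = j
  · simp only [hf', h, if_true, ContinuousLinearMap.smulRight_apply,
      ContinuousLinearMap.one_apply, one_smul]
    have hrx : ((((finCongr (List.length_finRange (n := k))).symm) r :
        Fin (List.finRange k).length) : ℕ) = (r : ℕ) := rfl
    rw [finRange_filter_lt r, finRange_filter_gt r, hrx]
    rw [← mul_assoc, trace_mul_comm, ← mul_assoc]
  · simp only [hf', h, if_false, ContinuousLinearMap.zero_apply, zero_mul, mul_zero,
      Matrix.trace_zero]

lemma diff_list_prod {ι : Type*} {N : ℕ} (L : List ι) (A : ι → ℂ → Matrix (Fin N) (Fin N) ℂ)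
    (h : ∀ x, Differentiable ℂ (A x)) :
    Differentiable ℂ (fun t => (L.map (fun x => A x t)).prod) := by
  induction L with
  | nil => simpa using differentiable_const (1 : Matrix (Fin N) (Fin N) ℂ)
  | cons a L ih =>
    simp only [List.map_cons, List.prod_cons]
    exact (h a).mul ih

lemma diff_affine {N n : ℕ} (X : Fin n → Matrix (Fin N) (Fin N) ℂ) (i : Fin n)
    (E2 : Matrix (Fin N) (Fin N) ℂ) (p : Fin n) :
    Differentiable ℂ (fun t : ℂ => X p + if p = i then t • E2 else 0) := by
  by_cases h : p = i
  · simp only [h, if_true]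
    exact (differentiable_id.smul_const E2).const_add _
  · simp only [h, if_false]
    exact differentiable_const _

lemma diff_trace_word {N n k : ℕ} (X : Fin n → Matrix (Fin N) (Fin N) ℂ) (i : Fin n)
    (E2 : Matrix (Fin N) (Fin N) ℂ) (ℓ : Fin k → Fin n) :
    Differentiable ℂ
      (fun t : ℂ => (wordProd (fun p => X p + if p = i then t • E2 else 0) ℓ).trace) := by
  have h := (traceCLM N).differentiable.comp
    (diff_list_prod (List.finRange k) (fun r t => X (ℓ r) + if ℓ r = i then t • E2 else 0)
      (fun r => diff_affine X i E2 (ℓ r)))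
  exact h

lemma diff_trace_cycDeriv {N n k : ℕ} (X : Fin n → Matrix (Fin N) (Fin N) ℂ) (i : Fin n)
    (E2 E1 : Matrix (Fin N) (Fin N) ℂ) (ℓ : Fin k → Fin n) (j : Fin n) :
    Differentiable ℂ
      (fun t : ℂ => (E1 * cycDeriv (fun p => X p + if p = i then t • E2 else 0) ℓ j).trace) := by
  have hcyc : Differentiable ℂ
      (fun t : ℂ => cycDeriv (fun p => X p + if p = i then t • E2 else 0) ℓ j) := by
    simp only [cycDeriv]
    apply Differentiable.fun_sum
    intro r _
    exact (diff_list_prod _ (fun s t => X (ℓ s) + if ℓ s = i then t • E2 else 0)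
        (fun s => diff_affine X i E2 (ℓ s))).mul
      (diff_list_prod _ (fun s t => X (ℓ s) + if ℓ s = i then t • E2 else 0)
        (fun s => diff_affine X i E2 (ℓ s)))
  have h := (traceCLM N).differentiable.comp (hcyc.const_mul E1)
  exact h

end Aux

/-- Leibniz rule for the noncommutative Hessian of a product of traces, with
the `Δ(P,Q)`-term given by twisted tensor products of cyclic gradients. -/
theorem stmt3 (N n k k' : ℕ) (hN : 0 < N) (hn : 0 < n)
    (X : Fin n → Matrix (Fin N) (Fin N) ℂ)
    (ℓ : Fin k → Fin n) (ℓ' : Fin k' → Fin n)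
    (i j : Fin n) (a b c d : Fin N) :
    mixedDeriv (fun s t =>
        Matrix.trace (wordProd (perturb X j i d a b c s t) ℓ) *
          Matrix.trace (wordProd (perturb X j i d a b c s t) ℓ')) =
      Matrix.trace (wordProd X ℓ') *
          mixedDeriv (fun s t => Matrix.trace (wordProd (perturb X j i d a b c s t) ℓ)) +
        Matrix.trace (wordProd X ℓ) *
          mixedDeriv (fun s t => Matrix.trace (wordProd (perturb X j i d a b c s t) ℓ')) +
        (cycDeriv X ℓ i) c b * (cycDeriv X ℓ' j) a d +
        (cycDeriv X ℓ' i) c b * (cycDeriv X ℓ j) a d := by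
  classical
  set E1 : Matrix (Fin N) (Fin N) ℂ := Matrix.single d a (1:ℂ) with hE1
  set E2 : Matrix (Fin N) (Fin N) ℂ := Matrix.single b c (1:ℂ) with hE2
  set Yt : ℂ → Fin n → Matrix (Fin N) (Fin N) ℂ :=
    fun t p => X p + (if p = i then t • E2 else 0) with hYt
  have hpert : ∀ s t : ℂ, perturb X j i d a b c s t
      = fun p => Yt t p + (if p = j then s • E1 else 0) := by
    intro s t; funext p
    simp only [perturb, hYt, ← hE1, ← hE2]
    abel
  have hY0 : Yt 0 = X := by
    funext p; simp [hYt]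
  -- inner derivatives in `s`
  have hP : ∀ t : ℂ, HasDerivAt
      (fun s => Matrix.trace (wordProd (perturb X j i d a b c s t) ℓ))
      ((E1 * cycDeriv (Yt t) ℓ j).trace) 0 := by
    intro t
    have h := hasDerivAt_trace_word (Yt t) ℓ j E1
    simp only [hpert] at *
    exact h
  have hQ : ∀ t : ℂ, HasDerivAt
      (fun s => Matrix.trace (wordProd (perturb X j i d a b c s t) ℓ'))
      ((E1 * cycDeriv (Yt t) ℓ' j).trace) 0 := by
    intro t
    have h := hasDerivAt_trace_word (Yt t) ℓ' j E1
    simp only [hpert] at *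
    exact h
  set φP : ℂ → ℂ := fun t => (E1 * cycDeriv (Yt t) ℓ j).trace with hφP
  set φQ : ℂ → ℂ := fun t => (E1 * cycDeriv (Yt t) ℓ' j).trace with hφQ
  set F0 : ℂ → ℂ := fun t => (wordProd (Yt t) ℓ).trace with hF0
  set G0 : ℂ → ℂ := fun t => (wordProd (Yt t) ℓ').trace with hG0
  have hp0 : ∀ t : ℂ, perturb X j i d a b c 0 t = Yt t := by
    intro t; funext p
    simp [perturb, hYt, ← hE1, ← hE2]
  -- the two mixed derivatives on the RHS
  have hHP : mixedDeriv (fun s t => Matrix.trace (wordProd (perturb X j i d a b c s t) ℓ))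
      = deriv φP 0 := by
    rw [mixedDeriv]
    congr 1
    funext t
    exact (hP t).deriv
  have hHQ : mixedDeriv (fun s t => Matrix.trace (wordProd (perturb X j i d a b c s t) ℓ'))
      = deriv φQ 0 := by
    rw [mixedDeriv]
    congr 1
    funext t
    exact (hQ t).deriv
  -- inner derivative of the product
  have inner_eq : ∀ t : ℂ,
      deriv (fun s => Matrix.trace (wordProd (perturb X j i d a b c s t) ℓ) *
        Matrix.trace (wordProd (perturb X j i d a b c s t) ℓ')) 0
      = φP t * G0 t + F0 t * φQ t := by
    intro t
    have h := ((hP t).mul (hQ t)).deriv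
    simp only [Pi.mul_def] at h
    rw [h, hp0 t]
  -- differentiability
  have hφPd : Differentiable ℂ φP := diff_trace_cycDeriv X i E2 E1 ℓ j
  have hφQd : Differentiable ℂ φQ := diff_trace_cycDeriv X i E2 E1 ℓ' j
  have hF0der : HasDerivAt F0 ((cycDeriv X ℓ i) c b) 0 := by
    have h := hasDerivAt_trace_word X ℓ i E2
    rw [hE2, trace_stdBasis_mul] at h
    convert h using 2
  have hG0der : HasDerivAt G0 ((cycDeriv X ℓ' i) c b) 0 := by
    have h := hasDerivAt_trace_word X ℓ' i E2
    rw [hE2, trace_stdBasis_mul] at h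
    convert h using 2
  -- compute LHS
  rw [mixedDeriv]
  have hfun2 : (fun t : ℂ => deriv (fun s =>
      Matrix.trace (wordProd (perturb X j i d a b c s t) ℓ) *
        Matrix.trace (wordProd (perturb X j i d a b c s t) ℓ')) 0)
      = fun t => φP t * G0 t + F0 t * φQ t := funext inner_eq
  rw [hfun2]
  rw [deriv_fun_add (f := fun t => φP t * G0 t) (g := fun t => F0 t * φQ t) (((hφPd 0).mul hG0der.differentiableAt))
    ((hF0der.differentiableAt.mul (hφQd 0)))]
  rw [deriv_fun_mul (hφPd 0) hG0der.differentiableAt,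
    deriv_fun_mul hF0der.differentiableAt (hφQd 0)]
  rw [hF0der.deriv, hG0der.deriv, hHP, hHQ]
  have hφP0 : φP 0 = (cycDeriv X ℓ j) a d := by
    rw [hφP]; simp only [hY0, hE1, trace_stdBasis_mul]
  have hφQ0 : φQ 0 = (cycDeriv X ℓ' j) a d := by
    rw [hφQ]; simp only [hY0, hE1, trace_stdBasis_mul]
  have hF00 : F0 0 = Matrix.trace (wordProd X ℓ) := by simp only [hF0, hY0]
  have hG00 : G0 0 = Matrix.trace (wordProd X ℓ') := by simp only [hG0, hY0]
  rw [hφP0, hφQ0, hF00, hG00]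
  ring
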